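/- Let N be a finite set, v : Finset N → ℝ with interactions I(S) = Σ_{T ⊆ S} (−1)^{|S|−|T|} · v(T), and fix i ∈ N. Define the masked set function v' : Finset N → ℝ by v'(T) = v(T ∖ {i}), i.e., the output when variable i is always masked, and let I' be its interactions. Then I'(S) = 0 for every S containing i, and I'(S) = I(S) for every S ⊆ N ∖ {i}. In particular, masking any word in a concept S removes that concept's interaction effect. -/

import Mathlib

open Finset

/-- The interaction effect (Harsanyi dividend) of a subset `S`:
`I(S) = ∑_{T ⊆ S} (-1)^(|S|-|T|) ⬝ v(T)`. -/
noncomputable def interaction {N : Type*} [DecidableEq N]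
    (v : Finset N → ℝ) (S : Finset N) : ℝ :=
  ∑ T ∈ S.powerset, (-1 : ℝ) ^ (S.card - T.card) * v T

/-- **Masking removes interactions (AND semantics).** Let `v'(T) = v(T \ {i})`
be the output when variable `i` is always masked. Then every interaction of
`v'` containing `i` vanishes, and interactions of `v'` among subsets not
containing `i` agree with those of `v`. -/
theorem interaction_masked_variable {N : Type*} [DecidableEq N]
    (v : Finset N → ℝ) (i : N)
    (v' : Finset N → ℝ) (hv' : ∀ T : Finset N, v' T = v (T.erase i)) :
    (∀ S : Finset N, i ∈ S → interaction v' S = 0) ∧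
    (∀ S : Finset N, i ∉ S → interaction v' S = interaction v S) := by
  constructor
  · intro S hi
    obtain ⟨s, hs, rfl⟩ : ∃ s, i ∉ s ∧ insert i s = S :=
      ⟨S.erase i, notMem_erase i S, insert_erase hi⟩
    unfold interaction
    rw [Finset.sum_powerset_insert hs]
    have h1 : ∀ T ∈ s.powerset,
        (-1 : ℝ) ^ ((insert i s).card - T.card) * v' T
        = -((-1 : ℝ) ^ ((insert i s).card - (insert i T).card) * v' (insert i T)) := by
      intro T hT
      rw [mem_powerset] at hT
      have hiT : i ∉ T := fun h => hs (hT h)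
      have hTs : T.card ≤ s.card := card_le_card hT
      rw [hv', hv', erase_insert hiT,
        erase_eq_of_notMem hiT, card_insert_of_notMem hs,
        card_insert_of_notMem hiT]
      have h2 : s.card + 1 - T.card = (s.card - T.card) + 1 := by omega
      have h3 : s.card + 1 - (T.card + 1) = s.card - T.card := by omega
      rw [h2, h3, pow_succ]
      ring
    rw [Finset.sum_congr rfl h1, Finset.sum_neg_distrib]
    ring
  · intro S hi
    unfold interaction
    apply Finset.sum_congr rfl
    intro T hT
    rw [mem_powerset] at hT
    have : i ∉ T := fun h => hi (hT h)
    rw [hv', erase_eq_of_notMem this]
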